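/- For every integer k ≥ 1, setting μ = 15 + 2k, the following inequality of rational numbers holds: (7/8 − 3/2)² + (9/8 − 3/2)² + 2·(11/8 − 3/2)² + 2·(13/8 − 3/2)² + (15/8 − 3/2)² + (17/8 − 3/2)² + ∑_{l=1}^{2k+7} ((l + 2k + 8)/(2(k+4)) − 3/2)² ≤ (μ/12)·(17/8 − 7/8). -/
import Mathlib

lemma sum_sq_shift (c : ℚ) : ∀ n : ℕ, ∑ l ∈ Finset.Icc 1 n, ((l : ℚ) - c) ^ 2
    = (n : ℚ) * (n + 1) * (2 * n + 1) / 6 - c * n * (n + 1) + n * c ^ 2 := by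
  intro n
  induction n with
  | zero => simp
  | succ m ih =>
      rw [Finset.sum_Icc_succ_top (by omega)]
      rw [ih]
      push_cast
      ring

theorem stmt_4 (k : ℕ) (hk : 1 ≤ k) :
    ((7/8 : ℚ) - 3/2) ^ 2 +
      ((9/8 : ℚ) - 3/2) ^ 2 +
      2 * ((11/8 : ℚ) - 3/2) ^ 2 +
      2 * ((13/8 : ℚ) - 3/2) ^ 2 +
      ((15/8 : ℚ) - 3/2) ^ 2 +
      ((17/8 : ℚ) - 3/2) ^ 2 +
      ∑ l ∈ Finset.Icc 1 (2 * k + 7), (((l : ℚ) + 2 * (k : ℚ) + 8) / (2 * ((k : ℚ) + 4)) - 3/2) ^ 2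
    ≤ ((15 + 2 * (k : ℚ)) / 12) * (17/8 - 7/8) := by
  have hx : (0 : ℚ) ≤ (k : ℚ) := Nat.cast_nonneg k
  have hne : (2 * ((k : ℚ) + 4)) ≠ 0 := by positivity
  have hsum : ∑ l ∈ Finset.Icc 1 (2 * k + 7),
      (((l : ℚ) + 2 * (k : ℚ) + 8) / (2 * ((k : ℚ) + 4)) - 3/2) ^ 2
      = (∑ l ∈ Finset.Icc 1 (2 * k + 7), ((l : ℚ) - ((k : ℚ) + 4)) ^ 2)
        / (2 * ((k : ℚ) + 4)) ^ 2 := by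
    rw [Finset.sum_div]
    apply Finset.sum_congr rfl
    intro l _
    rw [eq_div_iff (by positivity)]
    field_simp
    ring
  rw [hsum, sum_sq_shift]
  push_cast
  rw [add_div' _ _ _ (by positivity : ((2 * ((k : ℚ) + 4)) ^ 2) ≠ 0), div_le_iff₀ (by positivity : (0:ℚ) < (2 * ((k : ℚ) + 4)) ^ 2)]
  nlinarith [sq_nonneg ((k:ℚ)), hx]
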